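/- Let Ver : ZMod 4 → ZMod 4 → Bool be defined by Ver x y = true if and only if x + y ∈ {2, 3} (arithmetic in ZMod 4). Let σ₁ be the pair of permutations (x ↦ x + 1, y ↦ y - 1) of ZMod 4 and σ₂ the pair (x ↦ 1 - x, y ↦ -y), and let S be the subgroup of Equiv.Perm (ZMod 4) × Equiv.Perm (ZMod 4) generated by σ₁ and σ₂. Then Ver is regular with respect to S: (a) for every s ∈ S and every (x, y), Ver (s.1 x) (s.2 y) = Ver x y; and (b) for every (x₁, y₁) and (x₂, y₂) with Ver x₁ y₁ = Ver x₂ y₂, there exists exactly one s ∈ S with (s.1 x₁, s.2 y₁) = (x₂, y₂). -/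
import Mathlib
set_option maxRecDepth 4000

/-- The versatile gadget: `Ver x y = true` iff `x + y ∈ {2, 3}` in `ZMod 4`. -/
def Ver (x y : ZMod 4) : Bool := decide (x + y = 2 ∨ x + y = 3)

/-- The first generator: `(x ↦ x + 1, y ↦ y - 1)`. -/
def sigma1 : Equiv.Perm (ZMod 4) × Equiv.Perm (ZMod 4) :=
  (Equiv.addRight 1, Equiv.subRight 1)

/-- The second generator: `(x ↦ 1 - x, y ↦ -y)`. -/
def sigma2 : Equiv.Perm (ZMod 4) × Equiv.Perm (ZMod 4) :=
  (Equiv.subLeft 1, Equiv.neg (ZMod 4))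

def Hset : Finset (Equiv.Perm (ZMod 4) × Equiv.Perm (ZMod 4)) :=
  {1, sigma1, sigma1^2, sigma1^3, sigma2, sigma2*sigma1, sigma2*sigma1^2, sigma2*sigma1^3}

lemma verMemClos (s : Equiv.Perm (ZMod 4) × Equiv.Perm (ZMod 4)) :
    s ∈ Subgroup.closure ({sigma1, sigma2} :
      Set (Equiv.Perm (ZMod 4) × Equiv.Perm (ZMod 4))) ↔ s ∈ Hset := by
  constructor
  · intro h
    induction h using Subgroup.closure_induction with
    | mem t ht =>
      rcases ht with h | h <;> subst h <;> decide
    | one => decide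
    | mul a b _ _ ha hb =>
      have : ∀ a ∈ Hset, ∀ b ∈ Hset, a * b ∈ Hset := by decide
      exact this a ha b hb
    | inv a _ ha =>
      have : ∀ a ∈ Hset, a⁻¹ ∈ Hset := by decide
      exact this a ha
  · intro h
    have h1 : sigma1 ∈ Subgroup.closure ({sigma1, sigma2} :
        Set (Equiv.Perm (ZMod 4) × Equiv.Perm (ZMod 4))) :=
      Subgroup.subset_closure (by simp)
    have h2 : sigma2 ∈ Subgroup.closure ({sigma1, sigma2} :
        Set (Equiv.Perm (ZMod 4) × Equiv.Perm (ZMod 4))) :=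
      Subgroup.subset_closure (by simp)
    simp only [Hset, Finset.mem_insert, Finset.mem_singleton] at h
    rcases h with h|h|h|h|h|h|h|h <;> subst h
    · exact one_mem _
    · exact h1
    · exact pow_mem h1 2
    · exact pow_mem h1 3
    · exact h2
    · exact mul_mem h2 h1
    · exact mul_mem h2 (pow_mem h1 2)
    · exact mul_mem h2 (pow_mem h1 3)

/-- `Ver` is regular with respect to the subgroup generated by `sigma1` and `sigma2`. -/
theorem ver_regular :
    (∀ s ∈ Subgroup.closure ({sigma1, sigma2} :
        Set (Equiv.Perm (ZMod 4) × Equiv.Perm (ZMod 4))),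
      ∀ x y : ZMod 4, Ver (s.1 x) (s.2 y) = Ver x y) ∧
    (∀ x₁ y₁ x₂ y₂ : ZMod 4, Ver x₁ y₁ = Ver x₂ y₂ →
      ∃! s : Subgroup.closure ({sigma1, sigma2} :
          Set (Equiv.Perm (ZMod 4) × Equiv.Perm (ZMod 4))),
        ((s : Equiv.Perm (ZMod 4) × Equiv.Perm (ZMod 4)).1 x₁,
         (s : Equiv.Perm (ZMod 4) × Equiv.Perm (ZMod 4)).2 y₁) = (x₂, y₂)) := by
  have inv : ∀ s ∈ Hset, ∀ x y : ZMod 4, Ver (s.1 x) (s.2 y) = Ver x y := by decide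
  have exL : ∀ x₁ y₁ x₂ y₂ : ZMod 4, Ver x₁ y₁ = Ver x₂ y₂ →
      ∃ s ∈ Hset, (s.1 x₁, s.2 y₁) = (x₂, y₂) := by decide
  have uniq : ∀ x₁ y₁ : ZMod 4, ∀ s ∈ Hset, ∀ t ∈ Hset,
      s.1 x₁ = t.1 x₁ → s.2 y₁ = t.2 y₁ → s = t := by decide
  constructor
  · intro s hs x y
    exact inv s ((verMemClos s).mp hs) x y
  · intro x₁ y₁ x₂ y₂ hV
    obtain ⟨s, hs, hact⟩ := exL x₁ y₁ x₂ y₂ hV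
    refine ⟨⟨s, (verMemClos s).mpr hs⟩, hact, ?_⟩
    rintro ⟨t, ht⟩ hta
    have ht' := (verMemClos t).mp ht
    apply Subtype.ext
    have h1 : t.1 x₁ = s.1 x₁ := by
      have := congrArg Prod.fst hta; have := congrArg Prod.fst hact; simp_all
    have h2 : t.2 y₁ = s.2 y₁ := by
      have := congrArg Prod.snd hta; have := congrArg Prod.snd hact; simp_all
    exact uniq x₁ y₁ t ht' s hs h1 h2
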